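/- Let σ be a type (the alphabet), V a finite type with Fintype.card V = n, and δ : V → σ → Option V a partial deterministic labeled graph. Let u, v : V. If for every word w : List σ with w.length ≤ n − 1 the word w is traversable from u if and only if it is traversable from v, then for every word w : List σ (of any length), w is traversable from u if and only if it is traversable from v. -/

import Mathlib

/-- The state reached (if any) by following the word `w` from state `v` in the partial
deterministic labeled graph `δ`. -/
def reach {V σ : Type*} (δ : V → σ → Option V) : V → List σ → Option V
  | v, [] => some v
  | v, a :: w => (δ v a).bind (fun u => reach δ u w)

section Aux

variable {σ V : Type*}

/-- Indistinguishability by words of length at most `k`. -/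
def Ek (δ : V → σ → Option V) (k : ℕ) (a b : V) : Prop :=
  ∀ w : List σ, w.length ≤ k → ((reach δ a w).isSome ↔ (reach δ b w).isSome)

/-- Lift a relation to options. -/
def optRel (R : V → V → Prop) : Option V → Option V → Prop
  | none, none => True
  | some a, some b => R a b
  | _, _ => False

lemma Ek_mono (δ : V → σ → Option V) {k m : ℕ} (hkm : k ≤ m) {a b : V}
    (hab : Ek δ m a b) : Ek δ k a b :=
  fun w hw => hab w (hw.trans hkm)

lemma Ek_refl (δ : V → σ → Option V) (k : ℕ) (a : V) : Ek δ k a a :=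
  fun _ _ => Iff.rfl

lemma Ek_symm (δ : V → σ → Option V) (k : ℕ) {a b : V} (hab : Ek δ k a b) :
    Ek δ k b a := fun w hw => (hab w hw).symm

lemma Ek_trans (δ : V → σ → Option V) (k : ℕ) {a b c : V} (hab : Ek δ k a b)
    (hbc : Ek δ k b c) : Ek δ k a c := fun w hw => (hab w hw).trans (hbc w hw)

lemma optRel_congr {R S : V → V → Prop} (h : ∀ x y, R x y ↔ S x y) (o₁ o₂ : Option V) :
    optRel R o₁ o₂ ↔ optRel S o₁ o₂ := by
  cases o₁ <;> cases o₂ <;> simp [optRel, h]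

/-- The key recurrence. -/
lemma Ek_succ_iff (δ : V → σ → Option V) (k : ℕ) (a b : V) :
    Ek δ (k + 1) a b ↔ ∀ s : σ, optRel (Ek δ k) (δ a s) (δ b s) := by
  constructor
  · intro hab s
    have h1 := hab [s] (by simp)
    simp only [reach] at h1
    rcases ha : δ a s with _ | x <;> rcases hb : δ b s with _ | y <;>
        simp [ha, hb, reach, optRel] at h1 ⊢
    intro w hw
    have h2 := hab (s :: w) (by simpa using hw)
    simpa [reach, ha, hb] using h2
  · intro hR w hw
    cases w with
    | nil => simp [reach]
    | cons s w' =>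
      have hs := hR s
      rcases ha : δ a s with _ | x <;> rcases hb : δ b s with _ | y <;>
          simp [ha, hb, optRel] at hs <;> simp [reach, ha, hb]
      exact Bool.eq_iff_iff.mpr (hs w' (by simpa using hw))

/-- Once the relation stabilizes, it stabilizes forever. -/
lemma Ek_stable (δ : V → σ → Option V) (k : ℕ)
    (hstab : ∀ a b, Ek δ k a b → Ek δ (k + 1) a b) :
    ∀ m a b, Ek δ k a b ↔ Ek δ (k + m) a b := by
  intro m
  induction m with
  | zero => intro a b; rfl
  | succ m ih =>
    intro a b
    constructor
    · intro hab
      rw [show k + (m + 1) = (k + m) + 1 by ring, Ek_succ_iff]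
      have h1 : ∀ s, optRel (Ek δ k) (δ a s) (δ b s) :=
        (Ek_succ_iff δ k a b).mp (hstab a b hab)
      intro s
      exact (optRel_congr (fun x y => ih x y) _ _).mp (h1 s)
    · intro hab
      exact Ek_mono δ (Nat.le_add_right k (m + 1)) hab

end Aux

/-- If two states of a partial deterministic labeled graph on `n` states cannot be
distinguished by words of length at most `n - 1`, then they cannot be distinguished by
any word: the view of a vertex is already encoded in its subtree of depth `n - 1`. -/
theorem indistinguishable_of_short_words {σ V : Type*} [Fintype V] (n : ℕ)
    (hn : Fintype.card V = n) (δ : V → σ → Option V) (u v : V)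
    (h : ∀ w : List σ, w.length ≤ n - 1 →
      ((reach δ u w).isSome ↔ (reach δ v w).isSome)) :
    ∀ w : List σ, (reach δ u w).isSome ↔ (reach δ v w).isSome := by
  classical
  -- setoids
  set s : ℕ → Setoid V := fun k =>
    ⟨Ek δ k, ⟨Ek_refl δ k, Ek_symm δ k, Ek_trans δ k⟩⟩ with hs
  letI : ∀ k, DecidableRel (s k).r := fun k => Classical.decRel _
  set f : ℕ → ℕ := fun k => Fintype.card (Quotient (s k)) with hf
  have hn1 : 1 ≤ n := by
    rw [← hn]; exact Fintype.card_pos_iff.mpr ⟨u⟩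
  -- the projection maps
  have hsurj : ∀ k, Function.Surjective
      (Quotient.map' (id : V → V) (fun a b hab => Ek_mono δ (Nat.le_succ k) hab) :
        Quotient (s (k + 1)) → Quotient (s k)) := by
    intro k q
    refine Quotient.inductionOn' q (fun a => ⟨Quotient.mk'' a, rfl⟩)
  have hle : ∀ k, f k ≤ f (k + 1) := fun k =>
    Fintype.card_le_of_surjective _ (hsurj k)
  have hcard : ∀ k, f k ≤ n := by
    intro k
    rw [← hn]
    exact Fintype.card_le_of_surjective (Quotient.mk'' : V → Quotient (s k))
      (fun q => Quotient.inductionOn' q (fun a => ⟨a, rfl⟩))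
  -- find a stabilization point k ≤ n - 1
  have key : ∃ k ≤ n - 1, ∀ a b, Ek δ k a b → Ek δ (k + 1) a b := by
    by_contra hcon
    push_neg at hcon
    have hstrict : ∀ k ≤ n - 1, f k < f (k + 1) := by
      intro k hk
      rcases hcon k hk with ⟨a, b, hab, hnab⟩
      rcases lt_or_eq_of_le (hle k) with hlt | heq
      · exact hlt
      · exfalso
        have hbij : Function.Bijective
            (Quotient.map' (id : V → V)
              (fun a b hab => Ek_mono δ (Nat.le_succ k) hab) :
              Quotient (s (k + 1)) → Quotient (s k)) := by
          rw [Fintype.bijective_iff_surjective_and_card]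
          exact ⟨hsurj k, heq.symm⟩
        have : Quotient.mk'' a = (Quotient.mk'' b : Quotient (s (k + 1))) := by
          apply hbij.injective
          simpa using Quotient.sound' (hab : (s k).r a b)
        exact hnab (Quotient.exact' this)
    have hgrow : ∀ k ≤ n, k + 1 ≤ f k := by
      intro k
      induction k with
      | zero =>
        intro _
        have : Nonempty (Quotient (s 0)) := ⟨Quotient.mk'' u⟩
        simpa [hf] using Nat.succ_le_of_lt (Fintype.card_pos_iff.mpr this)
      | succ k ih =>
        intro hk
        have hk1 : k ≤ n - 1 := by omega
        have := hstrict k hk1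
        have := ih (by omega)
        omega
    have := hgrow n le_rfl
    have := hcard n
    omega
  rcases key with ⟨k, hk, hstab⟩
  have huv : Ek δ k u v := Ek_mono δ hk h
  intro w
  have : Ek δ (k + w.length) u v := (Ek_stable δ k hstab w.length u v).mp huv
  exact this w (Nat.le_add_left _ _)
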